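/- Let k ≥ 2, r ≥ 1 be integers, p a prime, and let Λ ≤ ℤ^{kr} be the lattice of all integer vectors (z₁₁,…,z_{kr}) satisfying z_{1j} + z_{2j} + ⋯ + z_{kj} ≡ 0 (mod p) for each j = 1,…,r. Then the covering number C(Λ) = min{|S| : S ⊆ ℤ^{kr}, {0,1}^{kr} ⊆ S + Λ} equals min{(k+1)^r, p^r}. -/

import Mathlib

open Finset

/-- The vertices of the unit cube in `ℤ^{kr}`. -/
def cubeVertices (k r : ℕ) : Set (Fin k → Fin r → ℤ) :=
  {z | ∀ i j, z i j = 0 ∨ z i j = 1}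

/-- The covering number of a lattice `Λ ≤ ℤ^{kr}`: the minimal number of translates of `Λ`
whose union contains all vertices of the unit cube. -/
noncomputable def coveringNumber {k r : ℕ} (Λ : AddSubgroup (Fin k → Fin r → ℤ)) : ℕ :=
  sInf {n : ℕ | ∃ S : Finset (Fin k → Fin r → ℤ), S.card = n ∧
    ∀ v ∈ cubeVertices k r, ∃ s ∈ S, v - s ∈ Λ}

section Aux

variable {k r p : ℕ} [NeZero p]

/-- The column-sum map into `(ZMod p)^r`. -/
private def phiMap (p : ℕ) (v : Fin k → Fin r → ℤ) : Fin r → ZMod p :=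
  fun j => ∑ i, ((v i j : ZMod p))

/-- The possible column sums. -/
private def Acol (k p : ℕ) : Finset (ZMod p) :=
  (Finset.range (k + 1)).image (Nat.cast)

/-- The explicit vertex with prescribed column sums. -/
private def Vmap (k r : ℕ) (f : Fin r → ZMod p) : Fin k → Fin r → ℤ :=
  fun i j => if (i : ℕ) < (f j).val then 1 else 0

private lemma sum_ite_lt (m : ℕ) (hm : m ≤ k) :
    ∑ i : Fin k, (if (i : ℕ) < m then (1 : ZMod p) else 0) = (m : ZMod p) := by
  rw [Fin.sum_univ_eq_sum_range (fun i => if i < m then (1 : ZMod p) else 0) k,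
    Finset.sum_boole]
  congr 1
  have : (Finset.range k).filter (· < m) = Finset.range m := by
    ext x
    simp only [mem_filter, mem_range]
    omega
  rw [this, Finset.card_range]

private lemma Vmap_mem_cube (f : Fin r → ZMod p) : Vmap k r f ∈ cubeVertices k r := by
  intro i j
  unfold Vmap
  split <;> simp

private lemma val_le_of_mem_Acol {x : ZMod p} (hx : x ∈ Acol k p) : x.val ≤ k := by
  obtain ⟨m, hm, rfl⟩ := Finset.mem_image.mp hx
  rw [Finset.mem_range] at hm
  calc (m : ZMod p).val = m % p := ZMod.val_natCast p m
  _ ≤ m := Nat.mod_le m p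
  _ ≤ k := by omega

private lemma phi_Vmap (f : Fin r → ZMod p) (hf : ∀ j, f j ∈ Acol k p) :
    phiMap p (Vmap k r f) = f := by
  funext j
  unfold phiMap Vmap
  have : ∀ i : Fin k, (((if (i : ℕ) < (f j).val then (1:ℤ) else 0) : ℤ) : ZMod p)
      = if (i : ℕ) < (f j).val then (1 : ZMod p) else 0 := by
    intro i; split <;> simp
  rw [Finset.sum_congr rfl (fun i _ => this i),
    sum_ite_lt ((f j).val) (val_le_of_mem_Acol (hf j)), ZMod.natCast_zmod_val]

private lemma phi_mem_Acol {v : Fin k → Fin r → ℤ} (hv : v ∈ cubeVertices k r) (j : Fin r) :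
    phiMap p v j ∈ Acol k p := by
  classical
  have h1 : phiMap p v j = ((Finset.univ.filter (fun i : Fin k => v i j = 1)).card : ZMod p) := by
    unfold phiMap
    rw [← Finset.sum_boole]
    refine Finset.sum_congr rfl fun i _ => ?_
    rcases hv i j with h | h <;> simp [h]
  rw [h1]
  refine Finset.mem_image.mpr ⟨_, Finset.mem_range.mpr ?_, rfl⟩
  calc (Finset.univ.filter (fun i : Fin k => v i j = 1)).card
      ≤ (Finset.univ : Finset (Fin k)).card := Finset.card_filter_le _ _
  _ = k := by simp
  _ < k + 1 := Nat.lt_succ_self k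

private lemma Acol_card (hp : p.Prime) : (Acol k p).card = min (k + 1) p := by
  rcases le_total (k + 1) p with h | h
  · rw [Acol, Finset.card_image_of_injOn, Finset.card_range, min_eq_left h]
    intro a ha b hb hab
    rw [Finset.mem_coe, Finset.mem_range] at ha hb
    have ha' := ZMod.val_cast_of_lt (lt_of_lt_of_le ha h)
    have hb' := ZMod.val_cast_of_lt (lt_of_lt_of_le hb h)
    rw [← ha', ← hb', hab]
  · have huniv : Acol k p = Finset.univ := by
      refine Finset.eq_univ_of_forall fun x => ?_
      exact Finset.mem_image.mpr ⟨x.val, Finset.mem_range.mpr (x.val_lt.trans_le h),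
        ZMod.natCast_zmod_val x⟩
    rw [huniv, Finset.card_univ, ZMod.card, min_eq_right h]

end Aux

theorem stmt15 (k r : ℕ) (hk : 2 ≤ k) (hr : 1 ≤ r) (p : ℕ) (hp : p.Prime)
    (Λ : AddSubgroup (Fin k → Fin r → ℤ))
    (hΛ : ∀ z, z ∈ Λ ↔ ∀ j, (p : ℤ) ∣ ∑ i, z i j) :
    coveringNumber Λ = min ((k + 1) ^ r) (p ^ r) := by
  classical
  haveI : NeZero p := ⟨hp.pos.ne'⟩
  -- membership criterion
  have hmem : ∀ v s : Fin k → Fin r → ℤ, v - s ∈ Λ ↔ phiMap p v = phiMap p s := by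
    intro v s
    rw [hΛ, funext_iff]
    refine forall_congr' fun j => ?_
    rw [← ZMod.intCast_zmod_eq_zero_iff_dvd]
    unfold phiMap
    simp only [Pi.sub_apply]
    push_cast
    rw [Finset.sum_sub_distrib, sub_eq_zero]
  -- the target finset
  set T : Finset (Fin r → ZMod p) := Fintype.piFinset (fun _ => Acol k p) with hT
  have hTcard : T.card = min ((k + 1) ^ r) (p ^ r) := by
    have h1 : T.card = min (k + 1) p ^ r := by
      rw [hT, Fintype.card_piFinset]
      simp [Acol_card hp]
    rw [h1]
    rcases le_total (k + 1) p with h | h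
    · rw [min_eq_left h, min_eq_left (Nat.pow_le_pow_left h r)]
    · rw [min_eq_right h, min_eq_right (Nat.pow_le_pow_left h r)]
  -- upper bound witness
  have hub : min ((k + 1) ^ r) (p ^ r) ∈ {n : ℕ | ∃ S : Finset (Fin k → Fin r → ℤ),
      S.card = n ∧ ∀ v ∈ cubeVertices k r, ∃ s ∈ S, v - s ∈ Λ} := by
    refine ⟨T.image (Vmap k r), ?_, ?_⟩
    · rw [Finset.card_image_of_injOn, hTcard]
      intro f hf g hg hfg
      rw [Finset.mem_coe, hT, Fintype.mem_piFinset] at hf hg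
      have : phiMap p (Vmap k r f) = phiMap p (Vmap k r g) := by rw [hfg]
      rwa [phi_Vmap f hf, phi_Vmap g hg] at this
    · intro v hv
      have hφv : ∀ j, phiMap p v j ∈ Acol k p := fun j => phi_mem_Acol hv j
      refine ⟨Vmap k r (phiMap p v), Finset.mem_image.mpr
        ⟨phiMap p v, Fintype.mem_piFinset.mpr hφv, rfl⟩, ?_⟩
      rw [hmem, phi_Vmap _ hφv]
  apply le_antisymm
  · exact Nat.sInf_le hub
  · refine le_csInf ⟨_, hub⟩ ?_
    rintro n ⟨S, rfl, hS⟩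
    rw [← hTcard]
    calc T.card ≤ (S.image (phiMap p)).card := by
          apply Finset.card_le_card
          intro f hf
          rw [hT, Fintype.mem_piFinset] at hf
          obtain ⟨s, hs, hsΛ⟩ := hS (Vmap k r f) (Vmap_mem_cube f)
          rw [hmem, phi_Vmap f hf] at hsΛ
          exact Finset.mem_image.mpr ⟨s, hs, hsΛ.symm⟩
    _ ≤ S.card := Finset.card_image_le
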